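/- Let σ : ℝ → ℝ be (q+1)-times continuously differentiable with bounded derivatives, and let u_σ ∈ ℝ be a point where σ^{(q)}(u_σ) ≠ 0. Define γ_k = (-1)^{q+k-1} / σ^{(q)}(u_σ) * C(q, k-1) and β_k = k-1 for k = 1, ..., q+1. Then there exists a constant C > 0 such that for every x_0 ∈ ℝ and every h ∈ (0,1], sup_{|x - x_0| ≤ h} | ∑_{k=1}^{q+1} γ_k σ(β_k (x - x_0) + u_σ) − (x − x_0)^q | ≤ C h^{q+1}. -/

import Mathlib

open Finset

private def Sq (q j : ℕ) : ℝ := ∑ k ∈ Finset.range (q+1), (-1:ℝ)^k * (q.choose k : ℝ) * (k:ℝ)^j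

private lemma Sq_recur (q j : ℕ) :
    Sq (q+1) j = -∑ i ∈ Finset.range j, (j.choose i : ℝ) * Sq q i := by
  have hpow : ∀ k : ℕ, ((k:ℝ)+1)^j = ∑ i ∈ Finset.range (j+1), (k:ℝ)^i * (j.choose i : ℝ) := by
    intro k
    simpa using add_pow (k:ℝ) 1 j
  have hA : (∑ k ∈ Finset.range (q+1), (-1:ℝ)^k * (q.choose k : ℝ) * ((k:ℝ)+1)^j)
      = ∑ i ∈ Finset.range (j+1), (j.choose i : ℝ) * Sq q i := by
    simp_rw [hpow, Finset.mul_sum]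
    rw [Finset.sum_comm]
    unfold Sq
    simp_rw [Finset.mul_sum]
    exact Finset.sum_congr rfl fun i _ => Finset.sum_congr rfl fun k _ => by ring
  have hB : (∑ k ∈ Finset.range (q+1), (-1:ℝ)^k * (q.choose (k+1) : ℝ) * ((k:ℝ)+1)^j)
      = -(Sq q j - (0:ℝ)^j) := by
    have h2 : (∑ k ∈ Finset.range (q+2), (-1:ℝ)^k * (q.choose k : ℝ) * (k:ℝ)^j)
        = Sq q j := by
      rw [Finset.sum_range_succ]
      simp [Sq, Nat.choose_succ_self]
    rw [Finset.sum_range_succ'] at h2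
    have h3 : (∑ k ∈ Finset.range (q+1), (-1:ℝ)^(k+1) * (q.choose (k+1) : ℝ) * ((k:ℝ)+1)^j)
        = Sq q j - (0:ℝ)^j := by
      push_cast at h2
      simp only [pow_zero, Nat.choose_zero_right, Nat.cast_one, one_mul] at h2
      linarith
    rw [← h3]
    rw [← Finset.sum_neg_distrib]
    exact Finset.sum_congr rfl fun k _ => by ring
  have hmain : Sq (q+1) j
      = -(∑ k ∈ Finset.range (q+1), (-1:ℝ)^k * (q.choose k : ℝ) * ((k:ℝ)+1)^j)
        - (∑ k ∈ Finset.range (q+1), (-1:ℝ)^k * (q.choose (k+1) : ℝ) * ((k:ℝ)+1)^j)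
        + (0:ℝ)^j := by
    unfold Sq
    rw [Finset.sum_range_succ']
    rw [← Finset.sum_neg_distrib, ← Finset.sum_sub_distrib]
    congr 1
    · apply Finset.sum_congr rfl
      intro k _
      rw [Nat.choose_succ_succ]
      push_cast
      ring
    · simp
  rw [hmain, hA, hB, Finset.sum_range_succ]
  simp
  ring

private lemma Sq_eq_zero {q j : ℕ} (h : j < q) : Sq q j = 0 := by
  induction q generalizing j with
  | zero => omega
  | succ q ih =>
    rw [Sq_recur]
    have : ∀ i ∈ Finset.range j, (j.choose i : ℝ) * Sq q i = 0 := by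
      intro i hi
      rw [ih (by simp at hi; omega), mul_zero]
    rw [Finset.sum_congr rfl this]
    simp

private lemma Sq_self (q : ℕ) : Sq q q = (-1:ℝ)^q * (q.factorial : ℝ) := by
  induction q with
  | zero => simp [Sq]
  | succ q ih =>
    rw [Sq_recur, Finset.sum_range_succ]
    have : ∀ i ∈ Finset.range q, ((q+1).choose i : ℝ) * Sq q i = 0 := by
      intro i hi
      rw [Sq_eq_zero (by simp at hi; omega), mul_zero]
    rw [Finset.sum_congr rfl this, Finset.sum_const_zero, zero_add, ih,
      Nat.choose_succ_self_right]
    rw [Nat.factorial_succ]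
    push_cast
    ring

private lemma iterWithin_eq {N m : ℕ} {f : ℝ → ℝ} (hf : ContDiff ℝ (N:ℕ∞) f) (hm : m ≤ N)
    {a b y : ℝ} (hab : a < b) (hy : y ∈ Set.Icc a b) :
    iteratedDerivWithin m f (Set.Icc a b) y = iteratedDeriv m f y := by
  have h := ((contDiff_iff_ftaylorSeries.mp hf).hasFTaylorSeriesUpToOn
    (Set.Icc a b)).eq_iteratedFDerivWithin_of_uniqueDiffOn
    (by exact_mod_cast hm) (uniqueDiffOn_Icc hab) hy
  rw [iteratedDerivWithin_eq_iteratedFDerivWithin, ← h]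
  rfl

private lemma taylor_bound_right {n : ℕ} {f : ℝ → ℝ} (hf : ContDiff ℝ ((n+1 : ℕ) : ℕ∞) f) {B : ℝ}
    (hB : ∀ x, |iteratedDeriv (n+1) f x| ≤ B) {u y : ℝ} (huy : u ≤ y) :
    |f y - ∑ j ∈ Finset.range (n+1), ((j.factorial : ℝ))⁻¹ * (y - u)^j * iteratedDeriv j f u|
      ≤ B * (y - u)^(n+1) / (n.factorial : ℝ) := by
  rcases eq_or_lt_of_le huy with rfl | hlt
  · have hsum : (∑ j ∈ Finset.range (n+1),
        ((j.factorial : ℝ))⁻¹ * (u - u)^j * iteratedDeriv j f u) = f u := by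
      rw [Finset.sum_range_succ']
      simp
    rw [hsum]
    simp
  · have key := taylor_mean_remainder_bound (f := f) (a := u) (b := y) (C := B) (n := n)
      huy (hf.contDiffOn) (Set.right_mem_Icc.mpr huy) ?_
    · have hTay : taylorWithinEval f n (Set.Icc u y) u y
          = ∑ j ∈ Finset.range (n+1),
            ((j.factorial : ℝ))⁻¹ * (y - u)^j * iteratedDeriv j f u := by
        rw [taylor_within_apply]
        refine Finset.sum_congr rfl fun j hj => ?_
        rw [iterWithin_eq hf (by simp at hj; omega) hlt (Set.left_mem_Icc.mpr huy)]
        rw [smul_eq_mul]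
      rw [hTay] at key
      rw [← Real.norm_eq_abs]
      exact key
    · intro z hz
      rw [iterWithin_eq hf le_rfl hlt hz, Real.norm_eq_abs]
      exact hB z

private lemma taylor_bound {n : ℕ} {f : ℝ → ℝ} (hf : ContDiff ℝ ((n+1 : ℕ) : ℕ∞) f) {B : ℝ}
    (hB : ∀ x, |iteratedDeriv (n+1) f x| ≤ B) (u y : ℝ) :
    |f y - ∑ j ∈ Finset.range (n+1), ((j.factorial : ℝ))⁻¹ * (y - u)^j * iteratedDeriv j f u|
      ≤ B * |y - u|^(n+1) / (n.factorial : ℝ) := by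
  rcases le_total u y with huy | hyu
  · rw [abs_of_nonneg (by linarith : (0:ℝ) ≤ y - u)]
    exact taylor_bound_right hf hB huy
  · set g : ℝ → ℝ := fun t => f (-t) with hg
    have hgc : ContDiff ℝ ((n+1 : ℕ) : ℕ∞) g := hf.comp contDiff_neg
    have hgd : ∀ j : ℕ, ∀ t : ℝ, iteratedDeriv j g t = (-1:ℝ)^j * iteratedDeriv j f (-t) := by
      intro j t
      rw [hg]
      rw [iteratedDeriv_comp_neg]
      rw [smul_eq_mul]
    have hgB : ∀ x, |iteratedDeriv (n+1) g x| ≤ B := by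
      intro x
      rw [hgd, abs_mul, abs_pow, abs_neg, abs_one, one_pow, one_mul]
      exact hB (-x)
    have key := taylor_bound_right hgc hgB (u := -u) (y := -y) (by linarith)
    have he : (-y : ℝ) - -u = u - y := by ring
    rw [he] at key
    have h1 : g (-y) = f y := by rw [hg]; simp
    have h2 : (∑ j ∈ Finset.range (n+1),
        ((j.factorial : ℝ))⁻¹ * (u - y)^j * iteratedDeriv j g (-u))
        = ∑ j ∈ Finset.range (n+1),
          ((j.factorial : ℝ))⁻¹ * (y - u)^j * iteratedDeriv j f u := by
      refine Finset.sum_congr rfl fun j _ => ?_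
      rw [hgd, neg_neg]
      have hx : (-1:ℝ)^j * (u - y)^j = (y - u)^j := by
        rw [← mul_pow, neg_one_mul, neg_sub]
      linear_combination ((j.factorial:ℝ))⁻¹ * iteratedDeriv j f u * hx
    rw [h1, h2] at key
    rw [abs_sub_comm y u, abs_of_nonneg (by linarith : (0:ℝ) ≤ u - y)]
    exact key

/-- A one-hidden-layer network with `q+1` neurons, activation `σ`, weights
`γ_k = (-1)^(q+k-1)/σ^{(q)}(u) * C(q,k-1)` and `β_k = k-1`, approximates the monomial
`(x - x₀)^q` uniformly on `[x₀ - h, x₀ + h]` with error `O(h^(q+1))`. -/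
theorem lnn_monomial_approx (q : ℕ) (σ : ℝ → ℝ)
    (hσ : ContDiff ℝ (q + 1 : ℕ) σ)
    (hbound : ∃ B : ℝ, ∀ j : ℕ, j ≤ q + 1 → ∀ x : ℝ, |iteratedDeriv j σ x| ≤ B)
    (u : ℝ) (hu : iteratedDeriv q σ u ≠ 0) :
    ∃ C : ℝ, 0 < C ∧ ∀ x₀ h : ℝ, 0 < h → h ≤ 1 → ∀ x : ℝ, |x - x₀| ≤ h →
      |(∑ k ∈ Finset.range (q + 1),
          ((-1 : ℝ) ^ (q + k) / iteratedDeriv q σ u * (q.choose k : ℝ)) *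
            σ ((k : ℝ) * (x - x₀) + u)) - (x - x₀) ^ q|
        ≤ C * h ^ (q + 1) := by
  obtain ⟨B, hB⟩ := hbound
  have hB0 : 0 ≤ B := le_trans (abs_nonneg _) (hB 0 (by omega) 0)
  set D := iteratedDeriv q σ u with hD
  set c : ℕ → ℝ := fun k => (-1:ℝ)^(q+k) / D * (q.choose k : ℝ) with hc
  have hcnn : ∀ k, 0 ≤ |c k| := fun k => abs_nonneg _
  refine ⟨(∑ k ∈ Finset.range (q+1), |c k| * (k:ℝ)^(q+1)) * B / (q.factorial : ℝ) + 1, ?_, ?_⟩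
  · have hs : 0 ≤ (∑ k ∈ Finset.range (q+1), |c k| * (k:ℝ)^(q+1)) :=
      Finset.sum_nonneg fun k _ => mul_nonneg (hcnn k) (by positivity)
    have : 0 ≤ (∑ k ∈ Finset.range (q+1), |c k| * (k:ℝ)^(q+1)) * B / (q.factorial : ℝ) := by
      apply div_nonneg (mul_nonneg hs hB0) (by positivity)
    linarith
  intro x₀ h hh hh1 x hx
  set t := x - x₀ with ht
  have hB1 : ∀ z, |iteratedDeriv (q+1) σ z| ≤ B := fun z => hB (q+1) le_rfl z
  have hTk : ∀ k : ℕ, |σ ((k:ℝ)*t + u) - ∑ j ∈ Finset.range (q+1),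
      ((j.factorial:ℝ))⁻¹ * ((k:ℝ)*t)^j * iteratedDeriv j σ u|
      ≤ B * |(k:ℝ)*t|^(q+1) / (q.factorial:ℝ) := by
    intro k
    have := taylor_bound (n := q) hσ hB1 u ((k:ℝ)*t + u)
    simpa using this
  have hid : (∑ k ∈ Finset.range (q+1), c k * (∑ j ∈ Finset.range (q+1),
      ((j.factorial:ℝ))⁻¹ * ((k:ℝ)*t)^j * iteratedDeriv j σ u)) = t^q := by
    have swap : (∑ k ∈ Finset.range (q+1), c k * (∑ j ∈ Finset.range (q+1),
        ((j.factorial:ℝ))⁻¹ * ((k:ℝ)*t)^j * iteratedDeriv j σ u))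
        = ∑ j ∈ Finset.range (q+1),
          (((j.factorial:ℝ))⁻¹ * t^j * iteratedDeriv j σ u / D * (-1:ℝ)^q) * Sq q j := by
      simp_rw [Finset.mul_sum]
      rw [Finset.sum_comm]
      unfold Sq
      simp_rw [Finset.mul_sum]
      refine Finset.sum_congr rfl fun j _ => Finset.sum_congr rfl fun k _ => ?_
      rw [hc, mul_pow]
      ring
    rw [swap, Finset.sum_range_succ]
    have hz : ∀ j ∈ Finset.range q,
        (((j.factorial:ℝ))⁻¹ * t^j * iteratedDeriv j σ u / D * (-1:ℝ)^q) * Sq q j = 0 := by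
      intro j hj
      rw [Sq_eq_zero (Finset.mem_range.mp hj), mul_zero]
    rw [Finset.sum_congr rfl hz, Finset.sum_const_zero, zero_add, Sq_self]
    have hsq : (-1:ℝ)^q * (-1:ℝ)^q = 1 := by
      rw [← pow_add]
      exact Even.neg_one_pow ⟨q, rfl⟩
    have hfac : (q.factorial : ℝ) ≠ 0 := by positivity
    rw [← hD]
    field_simp
    linear_combination t^q * hsq
  show |(∑ k ∈ Finset.range (q + 1), c k * σ ((k : ℝ) * t + u)) - t ^ q|
      ≤ ((∑ k ∈ Finset.range (q+1), |c k| * (k:ℝ)^(q+1)) * B / (q.factorial : ℝ) + 1) * h^(q+1)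
  have key : (∑ k ∈ Finset.range (q + 1), c k * σ ((k : ℝ) * t + u)) - t ^ q
      = ∑ k ∈ Finset.range (q + 1), c k * (σ ((k : ℝ) * t + u) - ∑ j ∈ Finset.range (q+1),
          ((j.factorial:ℝ))⁻¹ * ((k:ℝ)*t)^j * iteratedDeriv j σ u) := by
    simp_rw [mul_sub]
    rw [Finset.sum_sub_distrib, hid]
  rw [key]
  calc |∑ k ∈ Finset.range (q + 1), c k * (σ ((k : ℝ) * t + u) - ∑ j ∈ Finset.range (q+1),
          ((j.factorial:ℝ))⁻¹ * ((k:ℝ)*t)^j * iteratedDeriv j σ u)|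
      ≤ ∑ k ∈ Finset.range (q + 1), |c k * (σ ((k : ℝ) * t + u) - ∑ j ∈ Finset.range (q+1),
          ((j.factorial:ℝ))⁻¹ * ((k:ℝ)*t)^j * iteratedDeriv j σ u)| :=
        Finset.abs_sum_le_sum_abs _ _
    _ ≤ ∑ k ∈ Finset.range (q + 1), |c k| * (B * ((k:ℝ)*h)^(q+1) / (q.factorial:ℝ)) := by
        refine Finset.sum_le_sum fun k _ => ?_
        rw [abs_mul]
        refine mul_le_mul_of_nonneg_left (le_trans (hTk k) ?_) (hcnn k)
        have hkt : |(k:ℝ)*t| ≤ (k:ℝ)*h := by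
          rw [abs_mul, Nat.abs_cast]
          exact mul_le_mul_of_nonneg_left hx (Nat.cast_nonneg k)
        gcongr
    _ = (∑ k ∈ Finset.range (q+1), |c k| * (k:ℝ)^(q+1)) * B / (q.factorial : ℝ) * h^(q+1) := by
        rw [Finset.sum_mul, Finset.sum_div, Finset.sum_mul]
        exact Finset.sum_congr rfl fun k _ => by rw [mul_pow]; ring
    _ ≤ ((∑ k ∈ Finset.range (q+1), |c k| * (k:ℝ)^(q+1)) * B / (q.factorial : ℝ) + 1)
          * h^(q+1) := by
        have hp : (0:ℝ) < h^(q+1) := pow_pos hh _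
        nlinarith
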